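/- Let p be a prime, let Φ_p = F_2/K_{2,p} with standard generators x̄, ȳ (the images of the free generators a, b). Then the endomorphism of F_2 determined by a ↦ b a b⁻¹, b ↦ a b a⁻¹ maps K_{2,p} into K_{2,p} and hence induces an endomorphism σ of Φ_p with σ(x̄) = ȳ x̄ ȳ⁻¹ and σ(ȳ) = x̄ ȳ x̄⁻¹; this σ is an automorphism of Φ_p, it is an IA-automorphism (σ(g)·g⁻¹ ∈ [Φ_p, Φ_p] for all g), and it is not an inner automorphism. In particular, IA(Φ_p) ≠ Inn(Φ_p). -/

import Mathlib

/-- The subgroup generated by all `n`-th powers of elements of `H`. -/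
def Subgroup.nthPowers {G : Type*} [Group G] (H : Subgroup G) (n : ℕ) : Subgroup G :=
  Subgroup.closure {x | ∃ h ∈ H, h ^ n = x}

/-- The subgroups `K_{r,n}`: `K_{0,n} = F` and `K_{r+1,n} = [K_{r,n},K_{r,n}]·(K_{r,n})^n`. -/
def Ksub (G : Type*) [Group G] (n : ℕ) : ℕ → Subgroup G
  | 0 => ⊤
  | r + 1 => ⁅Ksub G n r, Ksub G n r⁆ ⊔ (Ksub G n r).nthPowers n

lemma map_nthPowers {G G' : Type*} [Group G] [Group G'] (f : G →* G') (H : Subgroup G) (n : ℕ) :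
    (H.nthPowers n).map f = (H.map f).nthPowers n := by
  unfold Subgroup.nthPowers
  rw [MonoidHom.map_closure]
  congr 1
  ext x
  constructor
  · rintro ⟨y, ⟨h, hh, rfl⟩, rfl⟩
    exact ⟨f h, ⟨h, hh, rfl⟩, (map_pow f h n).symm⟩
  · rintro ⟨h', ⟨h, hh, rfl⟩, rfl⟩
    exact ⟨h ^ n, ⟨h, hh, rfl⟩, map_pow f h n⟩

lemma Ksub_map (G : Type*) [Group G] (n r : ℕ) (φ : G ≃* G) :
    (Ksub G n r).map φ.toMonoidHom = Ksub G n r := by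
  induction r with
  | zero => simpa [Ksub] using Subgroup.map_top_of_surjective _ φ.surjective
  | succ r ih =>
    show (⁅Ksub G n r, Ksub G n r⁆ ⊔ (Ksub G n r).nthPowers n).map φ.toMonoidHom = _
    rw [Subgroup.map_sup, Subgroup.map_commutator, map_nthPowers, ih]
    rfl

instance Ksub_characteristic (G : Type*) [Group G] (n r : ℕ) : (Ksub G n r).Characteristic :=
  Subgroup.characteristic_iff_map_eq.mpr fun φ => Ksub_map G n r φ


lemma derivedSeries_le_Ksub (G : Type*) [Group G] (n r : ℕ) :
    derivedSeries G r ≤ Ksub G n r := by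
  induction r with
  | zero => simp [Ksub]
  | succ r ih =>
    calc derivedSeries G (r + 1) = ⁅derivedSeries G r, derivedSeries G r⁆ := rfl
    _ ≤ ⁅Ksub G n r, Ksub G n r⁆ := Subgroup.commutator_mono ih ih
    _ ≤ _ := le_sup_left

open scoped commutatorElement

/-! ### Auxiliary infrastructure -/

lemma nthPowers_mono {G : Type*} [Group G] {H K : Subgroup G} (h : H ≤ K) (n : ℕ) :
    H.nthPowers n ≤ K.nthPowers n :=
  Subgroup.closure_mono (fun _ ⟨a, ha, hx⟩ => ⟨a, h ha, hx⟩)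

lemma nthPowers_le {G : Type*} [Group G] {H K : Subgroup G} (n : ℕ)
    (h : ∀ x ∈ H, x ^ n ∈ K) : H.nthPowers n ≤ K :=
  (Subgroup.closure_le _).2 (by rintro x ⟨a, ha, rfl⟩; exact h a ha)

lemma mem_nthPowers {G : Type*} [Group G] {H : Subgroup G} (n : ℕ) {x : G} (hx : x ∈ H) :
    x ^ n ∈ H.nthPowers n :=
  Subgroup.subset_closure ⟨x, hx, rfl⟩

lemma Ksub_map_le {G G' : Type*} [Group G] [Group G'] (f : G →* G') (n r : ℕ) :
    (Ksub G n r).map f ≤ Ksub G' n r := by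
  induction r with
  | zero => exact le_top
  | succ r ih =>
    show (⁅Ksub G n r, Ksub G n r⁆ ⊔ (Ksub G n r).nthPowers n).map f ≤
      ⁅Ksub G' n r, Ksub G' n r⁆ ⊔ (Ksub G' n r).nthPowers n
    rw [Subgroup.map_sup, Subgroup.map_commutator, map_nthPowers]
    exact sup_le_sup (Subgroup.commutator_mono ih ih) (nthPowers_mono ih n)

lemma Ksub_succ_le (G : Type*) [Group G] (n r : ℕ) : Ksub G n (r + 1) ≤ Ksub G n r := by
  show ⁅Ksub G n r, Ksub G n r⁆ ⊔ (Ksub G n r).nthPowers n ≤ Ksub G n r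
  refine sup_le (Subgroup.commutator_le.2 fun g hg h hh => ?_)
    (nthPowers_le _ fun x hx => pow_mem hx n)
  exact mul_mem (mul_mem (mul_mem hg hh) (inv_mem hg)) (inv_mem hh)

lemma commutator_le_Ksub_one (G : Type*) [Group G] (n : ℕ) : commutator G ≤ Ksub G n 1 := by
  show commutator G ≤ ⁅(⊤ : Subgroup G), ⊤⁆ ⊔ (⊤ : Subgroup G).nthPowers n
  exact le_sup_left

lemma pow_mem_Ksub_one (G : Type*) [Group G] (n : ℕ) (x : G) : x ^ n ∈ Ksub G n 1 := by
  have : x ^ n ∈ (⊤ : Subgroup G).nthPowers n := mem_nthPowers n (Subgroup.mem_top x)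
  exact Subgroup.mem_sup_right this

/-! ### Finiteness of `G ⧸ Ksub G n 2` for finitely generated `G` -/

lemma quot_comm_of_commutator_le {G : Type*} [Group G] {K : Subgroup G} [K.Normal]
    (h : commutator G ≤ K) : ∀ a b : G ⧸ K, a * b = b * a := by
  intro a b
  obtain ⟨x, rfl⟩ := QuotientGroup.mk_surjective a
  obtain ⟨y, rfl⟩ := QuotientGroup.mk_surjective b
  have h1 : (QuotientGroup.mk' K) ⁅x, y⁆ = 1 := by
    rw [QuotientGroup.mk'_apply, QuotientGroup.eq_one_iff]
    exact h (Subgroup.commutator_mem_commutator (Subgroup.mem_top x) (Subgroup.mem_top y))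
  rw [map_commutatorElement] at h1
  exact commutatorElement_eq_one_iff_commute.1 h1

lemma conj_eq_self_of_comm {A : Type*} [Group A] (hcomm : ∀ u v : A, u * v = v * u) (a b : A) :
    b * a * b⁻¹ = a := by rw [hcomm b a, mul_inv_cancel_right]

lemma finite_of_fg_comm_pow {Q : Type*} [Group Q] [Group.FG Q] {n : ℕ} (hn : n ≠ 0)
    (hcomm : ∀ a b : Q, a * b = b * a) (hpow : ∀ a : Q, a ^ n = 1) : Finite Q := by
  letI : CommGroup Q := { (inferInstance : Group Q) with mul_comm := hcomm }
  exact CommGroup.finite_of_fg_torsion Q fun a =>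
    isOfFinOrder_iff_pow_eq_one.2 ⟨n, Nat.pos_of_ne_zero hn, hpow a⟩

instance : Group.FG (FreeGroup (Fin 2)) := by
  rw [Group.fg_iff]
  exact ⟨Set.range FreeGroup.of, FreeGroup.closure_range_of _, Set.finite_range _⟩

lemma finite_quot_Ksub_one (G : Type*) [Group G] [Group.FG G] {n : ℕ} (hn : n ≠ 0) :
    Finite (G ⧸ Ksub G n 1) := by
  refine finite_of_fg_comm_pow (n := n) hn
    (quot_comm_of_commutator_le (commutator_le_Ksub_one G n)) ?_
  intro a
  obtain ⟨x, rfl⟩ := QuotientGroup.mk_surjective a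
  rw [← QuotientGroup.mk_pow, QuotientGroup.eq_one_iff]
  exact pow_mem_Ksub_one G n x

lemma finite_quot_Ksub_two (G : Type*) [Group G] [Group.FG G] {n : ℕ} (hn : n ≠ 0) :
    Finite (G ⧸ Ksub G n 2) := by
  haveI h1 : Finite (G ⧸ Ksub G n 1) := finite_quot_Ksub_one G hn
  haveI : (Ksub G n 1).FiniteIndex := ⟨Subgroup.index_ne_zero_of_finite⟩
  haveI : Group.FG ↥(Ksub G n 1) := Subgroup.fg_of_index_ne_zero _
  have hle : Ksub G n 2 ≤ Ksub G n 1 := Ksub_succ_le G n 1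
  haveI : ((Ksub G n 2).subgroupOf (Ksub G n 1)).Normal := Subgroup.normal_subgroupOf
  haveI h2 : Finite (↥(Ksub G n 1) ⧸ (Ksub G n 2).subgroupOf (Ksub G n 1)) := by
    refine finite_of_fg_comm_pow (n := n) hn (quot_comm_of_commutator_le ?_) ?_
    · refine Subgroup.commutator_le.2 fun g _ h _ => ?_
      show (⁅g, h⁆ : ↥(Ksub G n 1)) ∈ (Ksub G n 2).subgroupOf (Ksub G n 1)
      rw [Subgroup.mem_subgroupOf]
      have : ((⁅g, h⁆ : ↥(Ksub G n 1)) : G) = ⁅(g : G), (h : G)⁆ :=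
        map_commutatorElement (Ksub G n 1).subtype g h
      rw [this]
      exact le_sup_left (α := Subgroup G) (Subgroup.commutator_mem_commutator g.2 h.2)
    · intro a
      obtain ⟨x, rfl⟩ := QuotientGroup.mk_surjective a
      rw [← QuotientGroup.mk_pow, QuotientGroup.eq_one_iff, Subgroup.mem_subgroupOf]
      have : ((x ^ n : ↥(Ksub G n 1)) : G) = (x : G) ^ n := by push_cast; rfl
      rw [this]
      exact Subgroup.mem_sup_right (Subgroup.subset_closure ⟨(x : G), x.2, rfl⟩)
  have hrel : ((Ksub G n 2).subgroupOf (Ksub G n 1)).index ≠ 0 :=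
    Subgroup.index_ne_zero_of_finite
  have hid1 : (Ksub G n 1).index ≠ 0 := Subgroup.index_ne_zero_of_finite
  have hidx : (Ksub G n 2).index ≠ 0 := by
    rw [← Subgroup.relIndex_mul_index hle]
    exact Nat.mul_ne_zero hrel hid1
  haveI : (Ksub G n 2).FiniteIndex := ⟨hidx⟩
  exact @Subgroup.finite_quotient_of_finiteIndex G _ _ ‹_›

/-! ### A Frattini-type argument in finite nilpotent groups -/

lemma eq_top_of_sup_commutator_eq_top {G : Type*} [Group G] [Finite G]
    (hnil : Group.IsNilpotent G) (K : Subgroup G) (h : K ⊔ commutator G = ⊤) : K = ⊤ := by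
  haveI : Finite (Subgroup G) :=
    Finite.of_injective (fun H : Subgroup G => (H : Set G)) SetLike.coe_injective
  by_contra hK
  obtain ⟨M, hM, hKM⟩ := (Finite.to_isCoatomic (α := Subgroup G)).eq_top_or_exists_le_coatom K
    |>.resolve_left hK
  have hiff : Group.IsNilpotent G ↔ ∀ H : Subgroup G, IsCoatom H → H.Normal :=
    (isNilpotent_of_finite_tfae (G := G)).out 0 2
  haveI hnorm : M.Normal := hiff.mp hnil M hM
  have hcomm : commutator G ≤ M := by
    rw [commutator, Subgroup.commutator_le]
    intro a _ b _
    suffices hc : Commute (QuotientGroup.mk' M a) (QuotientGroup.mk' M b) by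
      have : (QuotientGroup.mk' M) ⁅a, b⁆ = 1 := by
        rw [map_commutatorElement, commutatorElement_eq_one_iff_commute]; exact hc
      rwa [QuotientGroup.mk'_apply, QuotientGroup.eq_one_iff] at this
    set x := QuotientGroup.mk' M a
    set y := QuotientGroup.mk' M b
    rcases eq_or_ne x 1 with hx | hx
    · rw [hx]; exact Commute.one_left y
    · have hZ : Subgroup.zpowers x = ⊤ := by
        have hle : M ≤ (Subgroup.zpowers x).comap (QuotientGroup.mk' M) := by
          intro m hm
          have : QuotientGroup.mk' M m = 1 := by
            rw [QuotientGroup.mk'_apply, QuotientGroup.eq_one_iff]; exact hm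
          simp only [Subgroup.mem_comap, this]
          exact Subgroup.one_mem _
        rcases hle.lt_or_eq with hlt | heq
        · have htop := hM.2 _ hlt
          have : Subgroup.map (QuotientGroup.mk' M) ((Subgroup.zpowers x).comap
              (QuotientGroup.mk' M)) = Subgroup.zpowers x :=
            Subgroup.map_comap_eq_self_of_surjective (QuotientGroup.mk'_surjective M) _
          rw [htop] at this
          rw [← this, Subgroup.map_top_of_surjective _ (QuotientGroup.mk'_surjective M)]
        · exfalso
          apply hx
          have : a ∈ (Subgroup.zpowers x).comap (QuotientGroup.mk' M) := by
            simp only [Subgroup.mem_comap]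
            exact Subgroup.mem_zpowers x
          rw [← heq] at this
          rw [show x = QuotientGroup.mk' M a from rfl, QuotientGroup.mk'_apply,
            QuotientGroup.eq_one_iff]
          exact this
      have : y ∈ Subgroup.zpowers x := hZ ▸ Subgroup.mem_top y
      obtain ⟨k, hk⟩ := this
      rw [← hk]
      exact (Commute.refl x).zpow_right k
  have : (⊤ : Subgroup G) ≤ M := h ▸ sup_le hKM hcomm
  exact hM.1 (top_le_iff.mp this)

lemma quotFree_subgroup_eq_top {N : Subgroup (FreeGroup (Fin 2))} [N.Normal]
    (S : Subgroup (FreeGroup (Fin 2) ⧸ N))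
    (h0 : (QuotientGroup.mk (FreeGroup.of 0) : FreeGroup (Fin 2) ⧸ N) ∈ S)
    (h1 : (QuotientGroup.mk (FreeGroup.of 1) : FreeGroup (Fin 2) ⧸ N) ∈ S) : S = ⊤ := by
  have key : ∀ w : FreeGroup (Fin 2), (QuotientGroup.mk w : FreeGroup (Fin 2) ⧸ N) ∈ S := by
    intro w
    induction w using FreeGroup.induction_on with
    | C1 => exact S.one_mem
    | of i =>
      fin_cases i
      · exact h0
      · exact h1
    | inv_of x hx => rw [QuotientGroup.mk_inv]; exact S.inv_mem hx
    | mul x y hx hy => rw [QuotientGroup.mk_mul]; exact S.mul_mem hx hy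
  rw [eq_top_iff]
  intro g _
  obtain ⟨w, rfl⟩ := QuotientGroup.mk_surjective g
  exact key w

/-! ### The Magnus-embedding-style group `Mag p` -/

abbrev Qgrp (p : ℕ) := Multiplicative (ZMod p × ZMod p)
abbrev Rring (p : ℕ) := MonoidAlgebra (ZMod p) (Qgrp p)

@[ext] structure Mag (p : ℕ) where
  q : Qgrp p
  a : Rring p
  b : Rring p

namespace Mag
variable {p : ℕ}

noncomputable def sgl (q : Qgrp p) : Rring p := MonoidAlgebra.single q 1

lemma sgl_mul (q r : Qgrp p) : sgl (q * r) = sgl q * sgl r := by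
  rw [sgl, sgl, sgl, MonoidAlgebra.single_mul_single, mul_one]

lemma sgl_one : sgl (1 : Qgrp p) = 1 := (MonoidAlgebra.one_def).symm

noncomputable instance : Mul (Mag p) :=
  ⟨fun u v => ⟨u.q * v.q, u.a + sgl u.q * v.a, u.b + sgl u.q * v.b⟩⟩
noncomputable instance : One (Mag p) := ⟨⟨1, 0, 0⟩⟩
noncomputable instance : Inv (Mag p) :=
  ⟨fun u => ⟨u.q⁻¹, -(sgl u.q⁻¹ * u.a), -(sgl u.q⁻¹ * u.b)⟩⟩

@[simp] lemma mul_q (u v : Mag p) : (u * v).q = u.q * v.q := rfl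
@[simp] lemma mul_a (u v : Mag p) : (u * v).a = u.a + sgl u.q * v.a := rfl
@[simp] lemma mul_b (u v : Mag p) : (u * v).b = u.b + sgl u.q * v.b := rfl
@[simp] lemma inv_q (u : Mag p) : (u⁻¹).q = u.q⁻¹ := rfl
@[simp] lemma inv_a (u : Mag p) : (u⁻¹).a = -(sgl u.q⁻¹ * u.a) := rfl
@[simp] lemma inv_b (u : Mag p) : (u⁻¹).b = -(sgl u.q⁻¹ * u.b) := rfl
@[simp] lemma one_q : (1 : Mag p).q = 1 := rfl
@[simp] lemma one_a : (1 : Mag p).a = 0 := rfl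
@[simp] lemma one_b : (1 : Mag p).b = 0 := rfl

noncomputable instance : Group (Mag p) where
  mul_assoc u v w := by
    ext <;> simp [sgl_mul, mul_add, mul_assoc, add_assoc]
  one_mul u := by ext <;> simp [sgl_one]
  mul_one u := by ext <;> simp
  inv_mul_cancel u := by
    ext <;> simp [← sgl_mul]

def X (p : ℕ) : Qgrp p := Multiplicative.ofAdd (1, 0)
def Y (p : ℕ) : Qgrp p := Multiplicative.ofAdd (0, 1)
noncomputable def genA (p : ℕ) : Mag p := ⟨X p, 1, 0⟩
noncomputable def genB (p : ℕ) : Mag p := ⟨Y p, 0, 1⟩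

@[simp] lemma genA_q : (genA p).q = X p := rfl
@[simp] lemma genA_a : (genA p).a = 1 := rfl
@[simp] lemma genA_b : (genA p).b = 0 := rfl
@[simp] lemma genB_q : (genB p).q = Y p := rfl
@[simp] lemma genB_a : (genB p).a = 0 := rfl
@[simp] lemma genB_b : (genB p).b = 1 := rfl

def qhom (p : ℕ) : Mag p →* Qgrp p where
  toFun := Mag.q
  map_one' := rfl
  map_mul' _ _ := rfl

lemma Qgrp_pow_eq_one (z : Qgrp p) : z ^ p = 1 := by
  have h : z = Multiplicative.ofAdd z.toAdd := rfl
  rw [h, ← ofAdd_nsmul]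
  have h2 : p • z.toAdd = 0 := by
    ext <;> simp [nsmul_eq_mul, ZMod.natCast_self]
  rw [h2]
  rfl

lemma smul_p_eq_zero (f : Rring p) : p • f = 0 := by
  rw [← Nat.cast_smul_eq_nsmul (ZMod p), ZMod.natCast_self, zero_smul]

def relS (p : ℕ) : Subgroup (Mag p) where
  carrier := {u | u.a * (sgl (X p) - 1) + u.b * (sgl (Y p) - 1) = sgl u.q - 1}
  one_mem' := by simp [sgl_one]
  mul_mem' := by
    intro u v hu hv
    have hu' : u.a * (sgl (X p) - 1) + u.b * (sgl (Y p) - 1) = sgl u.q - 1 := hu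
    have hv' : v.a * (sgl (X p) - 1) + v.b * (sgl (Y p) - 1) = sgl v.q - 1 := hv
    show (u * v).a * (sgl (X p) - 1) + (u * v).b * (sgl (Y p) - 1) = sgl (u * v).q - 1
    rw [mul_a, mul_b, mul_q, sgl_mul]
    linear_combination hu' + sgl u.q * hv'
  inv_mem' := by
    intro u hu
    have hu' : u.a * (sgl (X p) - 1) + u.b * (sgl (Y p) - 1) = sgl u.q - 1 := hu
    have hc : sgl u.q⁻¹ * sgl u.q = 1 := by
      rw [← sgl_mul, inv_mul_cancel, sgl_one]
    show (u⁻¹).a * (sgl (X p) - 1) + (u⁻¹).b * (sgl (Y p) - 1) = sgl (u⁻¹).q - 1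
    rw [inv_a, inv_b, inv_q]
    linear_combination (-(sgl u.q⁻¹)) * hu' - hc

lemma genA_mem_relS : genA p ∈ relS p := by
  show (genA p).a * (sgl (X p) - 1) + (genA p).b * (sgl (Y p) - 1) = sgl (genA p).q - 1
  simp

lemma genB_mem_relS : genB p ∈ relS p := by
  show (genB p).a * (sgl (X p) - 1) + (genB p).b * (sgl (Y p) - 1) = sgl (genB p).q - 1
  simp

lemma mag_contradiction (p : ℕ) (hp : p.Prime) (H : Mag p) (hH : H ∈ relS p)
    (e1 : H * genA p * H⁻¹ = genB p * genA p * (genB p)⁻¹)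
    (e2 : H * genB p * H⁻¹ = genA p * genB p * (genA p)⁻¹) : False := by
  haveI : Fact p.Prime := ⟨hp⟩
  haveI : Fact (1 < p) := ⟨hp.one_lt⟩
  have hH' : H.a * (sgl (X p) - 1) + H.b * (sgl (Y p) - 1) = sgl H.q - 1 := hH
  have hc : sgl H.q * sgl H.q⁻¹ = 1 := by rw [← sgl_mul, mul_inv_cancel, sgl_one]
  have hsgl1 : sgl (1 : Qgrp p) = 1 := sgl_one
  have e1a := congrArg Mag.a e1
  have e2b := congrArg Mag.b e2
  simp only [mul_a, mul_q, inv_a, inv_b, inv_q, genA_q, genA_a, genA_b, genB_q, genB_a, genB_b,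
    mul_b, sgl_mul, mul_one, mul_zero, zero_add, add_zero, mul_neg, neg_zero] at e1a e2b
  have key : sgl H.q + sgl (1 : Qgrp p) = sgl (X p) + sgl (Y p) := by
    linear_combination e1a + e2b + hH' + (H.a * sgl (X p) + H.b * sgl (Y p)) * hc + hsgl1
  have hX1 : X p ≠ 1 := by
    simp only [X, ne_eq]
    intro hcon
    have := congrArg (fun z => (Multiplicative.toAdd z).1) hcon
    simp at this
  have hY1 : Y p ≠ 1 := by
    simp only [Y, ne_eq]
    intro hcon
    have := congrArg (fun z => (Multiplicative.toAdd z).2) hcon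
    simp at this
  have hXY : X p ≠ Y p := by
    simp only [X, Y, ne_eq]
    intro hcon
    have := congrArg (fun z => (Multiplicative.toAdd z).1) hcon
    simp at this
  have key2 : Finsupp.single H.q (1 : ZMod p) + Finsupp.single 1 1 =
      Finsupp.single (X p) 1 + Finsupp.single (Y p) 1 := congrArg MonoidAlgebra.coeff key
  rcases eq_or_ne H.q 1 with hq | hq
  · have := DFunLike.congr_fun key2 (X p)
    rw [hq] at this
    simp [Finsupp.add_apply, Finsupp.single_apply, Ne.symm hX1, Ne.symm hXY] at this
  · have := DFunLike.congr_fun key2 (1 : Qgrp p)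
    simp [Finsupp.add_apply, Finsupp.single_apply, hq, hX1, hY1] at this

lemma q_eq_one_of_mem_Ksub_one {p : ℕ} {u : Mag p} (hu : u ∈ Ksub (Mag p) p 1) : u.q = 1 := by
  have hle : Ksub (Mag p) p 1 ≤ (qhom p).ker := by
    show ⁅(⊤ : Subgroup (Mag p)), ⊤⁆ ⊔ (⊤ : Subgroup (Mag p)).nthPowers p ≤ (qhom p).ker
    refine sup_le (Abelianization.commutator_subset_ker (qhom p))
      (nthPowers_le _ fun x _ => ?_)
    show qhom p (x ^ p) = 1
    rw [map_pow]
    exact Qgrp_pow_eq_one _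
  exact hle hu

lemma pow_of_q_one {p : ℕ} {u : Mag p} (hq : u.q = 1) (k : ℕ) :
    u ^ k = ⟨1, k • u.a, k • u.b⟩ := by
  induction k with
  | zero => rw [pow_zero]; ext <;> simp
  | succ k ih =>
    rw [pow_succ, ih]
    refine Mag.ext ?_ ?_ ?_
    · show 1 * u.q = 1
      rw [hq, one_mul]
    · show k • u.a + sgl 1 * u.a = (k + 1) • u.a
      rw [sgl_one, one_mul, succ_nsmul]
    · show k • u.b + sgl 1 * u.b = (k + 1) • u.b
      rw [sgl_one, one_mul, succ_nsmul]

lemma Ksub_two_eq_bot (p : ℕ) : Ksub (Mag p) p 2 = ⊥ := by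
  rw [eq_bot_iff]
  show ⁅Ksub (Mag p) p 1, Ksub (Mag p) p 1⁆ ⊔ (Ksub (Mag p) p 1).nthPowers p ≤ ⊥
  refine sup_le (Subgroup.commutator_le.2 fun g hg h hh => ?_) (nthPowers_le _ fun x hx => ?_)
  · rw [Subgroup.mem_bot, commutatorElement_eq_one_iff_commute]
    have hgq := q_eq_one_of_mem_Ksub_one hg
    have hhq := q_eq_one_of_mem_Ksub_one hh
    show g * h = h * g
    ext <;> simp [hgq, hhq, sgl_one, add_comm]
  · rw [Subgroup.mem_bot, pow_of_q_one (q_eq_one_of_mem_Ksub_one hx)]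
    refine Mag.ext rfl ?_ ?_
    · show p • x.a = (1 : Mag p).a
      rw [smul_p_eq_zero]; rfl
    · show p • x.b = (1 : Mag p).b
      rw [smul_p_eq_zero]; rfl

noncomputable def theta (p : ℕ) : FreeGroup (Fin 2) →* Mag p :=
  FreeGroup.lift ![genA p, genB p]

lemma theta_range_le_relS (p : ℕ) : (theta p).range ≤ relS p := by
  rw [theta, FreeGroup.range_lift_eq_closure, Subgroup.closure_le]
  rintro x ⟨i, rfl⟩
  fin_cases i
  · simpa using genA_mem_relS
  · simpa using genB_mem_relS

lemma theta_ker (p : ℕ) : ∀ w ∈ Ksub (FreeGroup (Fin 2)) p 2, theta p w = 1 := by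
  intro w hw
  have : theta p w ∈ Ksub (Mag p) p 2 := Ksub_map_le (theta p) p 2 ⟨w, hw, rfl⟩
  rwa [Ksub_two_eq_bot, Subgroup.mem_bot] at this

end Mag

/-! ### The endomorphism and its descent to the quotient -/

noncomputable def fendo : FreeGroup (Fin 2) →* FreeGroup (Fin 2) :=
  FreeGroup.lift ![FreeGroup.of 1 * FreeGroup.of 0 * (FreeGroup.of 1)⁻¹,
    FreeGroup.of 0 * FreeGroup.of 1 * (FreeGroup.of 0)⁻¹]

noncomputable def sig0 (p : ℕ) :
    (FreeGroup (Fin 2) ⧸ Ksub (FreeGroup (Fin 2)) p 2) →*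
    (FreeGroup (Fin 2) ⧸ Ksub (FreeGroup (Fin 2)) p 2) :=
  QuotientGroup.map _ _ fendo
    (fun w hw => Subgroup.mem_comap.2 (Ksub_map_le fendo p 2 ⟨w, hw, rfl⟩))

lemma sig0_x (p : ℕ) :
    sig0 p (QuotientGroup.mk (FreeGroup.of 0)) =
      QuotientGroup.mk (FreeGroup.of 1) * QuotientGroup.mk (FreeGroup.of 0) *
        (QuotientGroup.mk (FreeGroup.of 1) :
          FreeGroup (Fin 2) ⧸ Ksub (FreeGroup (Fin 2)) p 2)⁻¹ := by
  show QuotientGroup.map _ _ fendo _ (QuotientGroup.mk (FreeGroup.of 0)) = _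
  rw [QuotientGroup.map_mk]
  have h : fendo (FreeGroup.of 0) =
      FreeGroup.of 1 * FreeGroup.of 0 * (FreeGroup.of 1)⁻¹ := by
    rw [fendo, FreeGroup.lift_apply_of]
    simp
  rw [h]
  simp [QuotientGroup.mk_mul, QuotientGroup.mk_inv]

lemma sig0_y (p : ℕ) :
    sig0 p (QuotientGroup.mk (FreeGroup.of 1)) =
      QuotientGroup.mk (FreeGroup.of 0) * QuotientGroup.mk (FreeGroup.of 1) *
        (QuotientGroup.mk (FreeGroup.of 0) :
          FreeGroup (Fin 2) ⧸ Ksub (FreeGroup (Fin 2)) p 2)⁻¹ := by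
  show QuotientGroup.map _ _ fendo _ (QuotientGroup.mk (FreeGroup.of 1)) = _
  rw [QuotientGroup.map_mk]
  have h : fendo (FreeGroup.of 1) =
      FreeGroup.of 0 * FreeGroup.of 1 * (FreeGroup.of 0)⁻¹ := by
    rw [fendo, FreeGroup.lift_apply_of]
    simp
  rw [h]
  simp [QuotientGroup.mk_mul, QuotientGroup.mk_inv]

noncomputable def thetaBar (p : ℕ) :
    (FreeGroup (Fin 2) ⧸ Ksub (FreeGroup (Fin 2)) p 2) →* Mag p :=
  QuotientGroup.lift _ (Mag.theta p)
    (fun w hw => MonoidHom.mem_ker.2 (Mag.theta_ker p w hw))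

lemma thetaBar_mk (p : ℕ) (w : FreeGroup (Fin 2)) :
    thetaBar p (QuotientGroup.mk w) = Mag.theta p w := rfl


/-- For a prime `p`, the endomorphism of `F₂` given by `a ↦ b a b⁻¹`, `b ↦ a b a⁻¹` maps
`K_{2,p}` into itself and hence induces an endomorphism `σ` of `Φ_p = F₂/K_{2,p}` with
`σ(x̄) = ȳ x̄ ȳ⁻¹` and `σ(ȳ) = x̄ ȳ x̄⁻¹`; this `σ` is an automorphism of `Φ_p`, it is an
IA-automorphism, and it is not inner. In particular `IA(Φ_p) ≠ Inn(Φ_p)`. -/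

theorem exists_IA_not_inner (p : ℕ) (hp : p.Prime) :
    (∀ w ∈ Ksub (FreeGroup (Fin 2)) p 2,
      FreeGroup.lift
        ![FreeGroup.of 1 * FreeGroup.of 0 * (FreeGroup.of 1)⁻¹,
          FreeGroup.of 0 * FreeGroup.of 1 * (FreeGroup.of 0)⁻¹] w ∈
        Ksub (FreeGroup (Fin 2)) p 2) ∧
    ∃ σ : MulAut (FreeGroup (Fin 2) ⧸ Ksub (FreeGroup (Fin 2)) p 2),
      σ (QuotientGroup.mk (FreeGroup.of 0)) =
          QuotientGroup.mk (FreeGroup.of 1) * QuotientGroup.mk (FreeGroup.of 0) *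
            (QuotientGroup.mk (FreeGroup.of 1) :
              FreeGroup (Fin 2) ⧸ Ksub (FreeGroup (Fin 2)) p 2)⁻¹ ∧
      σ (QuotientGroup.mk (FreeGroup.of 1)) =
          QuotientGroup.mk (FreeGroup.of 0) * QuotientGroup.mk (FreeGroup.of 1) *
            (QuotientGroup.mk (FreeGroup.of 0) :
              FreeGroup (Fin 2) ⧸ Ksub (FreeGroup (Fin 2)) p 2)⁻¹ ∧
      (∀ g, σ g * g⁻¹ ∈ commutator (FreeGroup (Fin 2) ⧸ Ksub (FreeGroup (Fin 2)) p 2)) ∧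
      ¬∃ h : FreeGroup (Fin 2) ⧸ Ksub (FreeGroup (Fin 2)) p 2, ∀ g, σ g = h * g * h⁻¹ := by
  classical
  have hmap : ∀ w ∈ Ksub (FreeGroup (Fin 2)) p 2,
      FreeGroup.lift
        ![FreeGroup.of 1 * FreeGroup.of 0 * (FreeGroup.of 1)⁻¹,
          FreeGroup.of 0 * FreeGroup.of 1 * (FreeGroup.of 0)⁻¹] w ∈
        Ksub (FreeGroup (Fin 2)) p 2 :=
    fun w hw => Ksub_map_le fendo p 2 ⟨w, hw, rfl⟩
  refine ⟨hmap, ?_⟩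
  haveI : Fact p.Prime := ⟨hp⟩
  haveI : Finite (FreeGroup (Fin 2) ⧸ Ksub (FreeGroup (Fin 2)) p 2) :=
    finite_quot_Ksub_two _ hp.ne_zero
  have hx := sig0_x p
  have hy := sig0_y p
  -- the quotient is a p-group, hence nilpotent
  have hPG : IsPGroup p (FreeGroup (Fin 2) ⧸ Ksub (FreeGroup (Fin 2)) p 2) := by
    intro g
    refine ⟨2, ?_⟩
    obtain ⟨w, rfl⟩ := QuotientGroup.mk_surjective g
    rw [← QuotientGroup.mk_pow, QuotientGroup.eq_one_iff]
    have hw2 : w ^ p ^ 2 = (w ^ p) ^ p := by rw [← pow_mul, pow_two]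
    rw [hw2]
    have h1 : w ^ p ∈ Ksub (FreeGroup (Fin 2)) p 1 := pow_mem_Ksub_one _ p w
    show (w ^ p) ^ p ∈ ⁅Ksub (FreeGroup (Fin 2)) p 1, Ksub (FreeGroup (Fin 2)) p 1⁆ ⊔
      (Ksub (FreeGroup (Fin 2)) p 1).nthPowers p
    exact Subgroup.mem_sup_right (mem_nthPowers p h1)
  have hnil : Group.IsNilpotent (FreeGroup (Fin 2) ⧸ Ksub (FreeGroup (Fin 2)) p 2) :=
    hPG.isNilpotent
  -- surjectivity of sig0
  have hsup : (sig0 p).range ⊔ commutator (FreeGroup (Fin 2) ⧸ Ksub (FreeGroup (Fin 2)) p 2)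
      = ⊤ := by
    apply quotFree_subgroup_eq_top
    · have hxx : (QuotientGroup.mk (FreeGroup.of 0) :
          FreeGroup (Fin 2) ⧸ Ksub (FreeGroup (Fin 2)) p 2) =
          ⁅(QuotientGroup.mk (FreeGroup.of 1) :
            FreeGroup (Fin 2) ⧸ Ksub (FreeGroup (Fin 2)) p 2),
            QuotientGroup.mk (FreeGroup.of 0)⁆⁻¹ *
            sig0 p (QuotientGroup.mk (FreeGroup.of 0)) := by
        rw [hx, commutatorElement_def]
        group
      rw [hxx]
      exact Subgroup.mul_mem _
        (Subgroup.inv_mem _ (Subgroup.mem_sup_right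
          (Subgroup.commutator_mem_commutator (Subgroup.mem_top _) (Subgroup.mem_top _))))
        (Subgroup.mem_sup_left ⟨_, rfl⟩)
    · have hyy : (QuotientGroup.mk (FreeGroup.of 1) :
          FreeGroup (Fin 2) ⧸ Ksub (FreeGroup (Fin 2)) p 2) =
          ⁅(QuotientGroup.mk (FreeGroup.of 0) :
            FreeGroup (Fin 2) ⧸ Ksub (FreeGroup (Fin 2)) p 2),
            QuotientGroup.mk (FreeGroup.of 1)⁆⁻¹ *
            sig0 p (QuotientGroup.mk (FreeGroup.of 1)) := by
        rw [hy, commutatorElement_def]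
        group
      rw [hyy]
      exact Subgroup.mul_mem _
        (Subgroup.inv_mem _ (Subgroup.mem_sup_right
          (Subgroup.commutator_mem_commutator (Subgroup.mem_top _) (Subgroup.mem_top _))))
        (Subgroup.mem_sup_left ⟨_, rfl⟩)
  have hrtop : (sig0 p).range = ⊤ := eq_top_of_sup_commutator_eq_top hnil _ hsup
  have hsurj : Function.Surjective (sig0 p) := fun y => by
    have : y ∈ (sig0 p).range := hrtop ▸ Subgroup.mem_top y
    exact this
  have hinj : Function.Injective (sig0 p) := Finite.injective_iff_surjective.mpr hsurj
  refine ⟨MulEquiv.ofBijective (sig0 p) ⟨hinj, hsurj⟩, hx, hy, ?_, ?_⟩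
  · -- IA property
    intro g
    show sig0 p g * g⁻¹ ∈ commutator (FreeGroup (Fin 2) ⧸ Ksub (FreeGroup (Fin 2)) p 2)
    set c := QuotientGroup.mk'
      (commutator (FreeGroup (Fin 2) ⧸ Ksub (FreeGroup (Fin 2)) p 2)) with hc
    have hcommab : ∀ u v : (FreeGroup (Fin 2) ⧸ Ksub (FreeGroup (Fin 2)) p 2) ⧸
        commutator (FreeGroup (Fin 2) ⧸ Ksub (FreeGroup (Fin 2)) p 2), u * v = v * u :=
      quot_comm_of_commutator_le le_rfl
    have hcomp : c.comp (sig0 p) = c := by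
      rw [← MonoidHom.cancel_right
        (QuotientGroup.mk'_surjective (Ksub (FreeGroup (Fin 2)) p 2))]
      apply FreeGroup.ext_hom
      intro i
      fin_cases i
      · show c (sig0 p (QuotientGroup.mk (FreeGroup.of 0))) =
          c (QuotientGroup.mk (FreeGroup.of 0))
        rw [hx, map_mul, map_mul, map_inv]
        exact conj_eq_self_of_comm hcommab _ _
      · show c (sig0 p (QuotientGroup.mk (FreeGroup.of 1))) =
          c (QuotientGroup.mk (FreeGroup.of 1))
        rw [hy, map_mul, map_mul, map_inv]
        exact conj_eq_self_of_comm hcommab _ _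
    have h1 : c (sig0 p g) = c g := DFunLike.congr_fun hcomp g
    have h2 : c (sig0 p g * g⁻¹) = 1 := by
      rw [map_mul, map_inv, h1, mul_inv_cancel]
    rwa [hc, QuotientGroup.mk'_apply, QuotientGroup.eq_one_iff] at h2
  · -- not inner
    rintro ⟨h, hh⟩
    have e1' : h * QuotientGroup.mk (FreeGroup.of 0) * h⁻¹ =
        QuotientGroup.mk (FreeGroup.of 1) * QuotientGroup.mk (FreeGroup.of 0) *
          (QuotientGroup.mk (FreeGroup.of 1) :
            FreeGroup (Fin 2) ⧸ Ksub (FreeGroup (Fin 2)) p 2)⁻¹ :=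
      (hh _).symm.trans hx
    have e2' : h * QuotientGroup.mk (FreeGroup.of 1) * h⁻¹ =
        QuotientGroup.mk (FreeGroup.of 0) * QuotientGroup.mk (FreeGroup.of 1) *
          (QuotientGroup.mk (FreeGroup.of 0) :
            FreeGroup (Fin 2) ⧸ Ksub (FreeGroup (Fin 2)) p 2)⁻¹ :=
      (hh _).symm.trans hy
    have hA : thetaBar p (QuotientGroup.mk (FreeGroup.of 0)) = Mag.genA p := by
      rw [thetaBar_mk, Mag.theta, FreeGroup.lift_apply_of]
      simp
    have hB : thetaBar p (QuotientGroup.mk (FreeGroup.of 1)) = Mag.genB p := by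
      rw [thetaBar_mk, Mag.theta, FreeGroup.lift_apply_of]
      simp
    have hrel : thetaBar p h ∈ Mag.relS p := by
      obtain ⟨w, rfl⟩ := QuotientGroup.mk_surjective h
      rw [thetaBar_mk]
      exact Mag.theta_range_le_relS p ⟨w, rfl⟩
    have E1 : thetaBar p h * Mag.genA p * (thetaBar p h)⁻¹ =
        Mag.genB p * Mag.genA p * (Mag.genB p)⁻¹ := by
      have := congrArg (thetaBar p) e1'
      rw [map_mul, map_mul, map_inv, map_mul, map_mul, map_inv, hA, hB] at this
      exact this
    have E2 : thetaBar p h * Mag.genB p * (thetaBar p h)⁻¹ =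
        Mag.genA p * Mag.genB p * (Mag.genA p)⁻¹ := by
      have := congrArg (thetaBar p) e2'
      rw [map_mul, map_mul, map_inv, map_mul, map_mul, map_inv, hA, hB] at this
      exact this
    exact Mag.mag_contradiction p hp _ hrel E1 E2
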